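/- If ‖·‖ is an L-norm on M_n(ℂ) with ω(A) ≤ ‖A‖ for all A (ω the numerical radius), then ‖A‖₁ ≤ ‖A‖ for all A; i.e., the trace norm is the minimum L-norm dominating the numerical radius norm. -/

import Mathlib

open Matrix BigOperators ComplexOrder

/-- Square complex matrices. -/
abbrev Mat (n : ℕ) := Matrix (Fin n) (Fin n) ℂ

/-- `N` is a norm on `Mat n`. -/
def IsMatrixNorm {n : ℕ} (N : Mat n → ℝ) : Prop :=
  (∀ A, N A = 0 ↔ A = 0) ∧
  (∀ (c : ℂ) (A : Mat n), N (c • A) = ‖c‖ * N A) ∧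
  (∀ A B : Mat n, N (A + B) ≤ N A + N B)

/-- A set of matrices is C*-convex. -/
def CStarConvex {n : ℕ} (K : Set (Mat n)) : Prop :=
  ∀ (k : ℕ) (C A : Fin k → Mat n), (∀ i, A i ∈ K) →
    (∑ i, (C i)ᴴ * C i = 1) → (∑ i, (C i)ᴴ * A i * C i) ∈ K

/-- `N` is an M-norm. -/
def IsMNorm {n : ℕ} (N : Mat n → ℝ) : Prop :=
  ∀ (k : ℕ) (C X : Fin k → Mat n), (∑ i, (C i)ᴴ * C i = 1) →
    N (∑ i, (C i)ᴴ * X i * C i) ≤ ⨆ i, N (X i)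

/-- `N` is an L-norm. -/
def IsLNorm {n : ℕ} (N : Mat n → ℝ) : Prop :=
  ∀ (k : ℕ) (C : Fin k → Mat n) (X : Mat n), (∑ i, (C i)ᴴ * C i = 1) →
    ∑ i, N (C i * X * (C i)ᴴ) ≤ N X

/-- The dual norm with respect to the pairing `⟨Y|X⟩ = Tr(Yᴴ X)`. -/
noncomputable def dualNorm {n : ℕ} (N : Mat n → ℝ) (Y : Mat n) : ℝ :=
  sSup {r | ∃ X : Mat n, N X ≤ 1 ∧ r = ‖(Yᴴ * X).trace‖}

/-- The operator (spectral) norm of a matrix. -/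
noncomputable def opNorm {n : ℕ} (A : Mat n) : ℝ :=
  ‖Matrix.toEuclideanCLM (𝕜 := ℂ) (n := Fin n) A‖

/-- The square root of a positive semidefinite matrix (as in the older Mathlib). -/
noncomputable def Matrix.PosSemidef.sqrt {n : ℕ} {A : Mat n} (hA : A.PosSemidef) : Mat n :=
  hA.1.eigenvectorUnitary.1 * diagonal ((↑) ∘ (√·) ∘ hA.1.eigenvalues) *
    (star hA.1.eigenvectorUnitary : Mat n)

/-- The trace norm `‖A‖₁ = Tr((AᴴA)^{1/2})`. -/
noncomputable def traceNorm {n : ℕ} (A : Mat n) : ℝ :=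
  ((Matrix.posSemidef_conjTranspose_mul_self A).sqrt).trace.re

/-- The numerical radius. -/
noncomputable def numRadius {n : ℕ} (A : Mat n) : ℝ :=
  sSup {r | ∃ x : EuclideanSpace ℂ (Fin n), ‖x‖ = 1 ∧
    r = ‖inner ℂ x (Matrix.toEuclideanCLM (𝕜 := ℂ) (n := Fin n) A x)‖}

namespace TNauxPf

variable {n : ℕ}

lemma vmv_conjT (v : Fin n → ℂ) : (vecMulVec v (star v))ᴴ = vecMulVec v (star v) := by
  ext i j
  simp [vecMulVec_apply, conjTranspose_apply, mul_comm]

lemma vmv_mul_mul (v : Fin n → ℂ) (M : Mat n) :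
    vecMulVec v (star v) * M * vecMulVec v (star v)
      = (star v ⬝ᵥ (M *ᵥ v)) • vecMulVec v (star v) := by
  ext i j
  simp only [Matrix.mul_apply, vecMulVec_apply, Matrix.smul_apply, dotProduct, mulVec,
    smul_eq_mul, Finset.sum_mul, Finset.mul_sum, Pi.star_apply]
  rw [Finset.sum_comm]
  apply Finset.sum_congr rfl
  intro p _
  apply Finset.sum_congr rfl
  intro q _
  ring

lemma vmv_mulVec (v w x : Fin n → ℂ) : vecMulVec v w *ᵥ x = (w ⬝ᵥ x) • v := by
  ext i
  simp only [vecMulVec_apply, mulVec, dotProduct, Pi.smul_apply, smul_eq_mul, Finset.sum_mul]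
  apply Finset.sum_congr rfl
  intros; ring

lemma le_numRadius (A : Mat n) (x : EuclideanSpace ℂ (Fin n)) (hx : ‖x‖ = 1) :
    ‖inner ℂ x (Matrix.toEuclideanCLM (𝕜 := ℂ) (n := Fin n) A x)‖ ≤ numRadius A := by
  apply le_csSup
  · refine ⟨‖Matrix.toEuclideanCLM (𝕜 := ℂ) (n := Fin n) A‖, ?_⟩
    rintro r ⟨y, hy, rfl⟩
    calc ‖inner ℂ y (Matrix.toEuclideanCLM (𝕜 := ℂ) (n := Fin n) A y)‖
        ≤ ‖y‖ * ‖Matrix.toEuclideanCLM (𝕜 := ℂ) (n := Fin n) A y‖ := by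
          exact norm_inner_le_norm _ _
      _ ≤ ‖y‖ * (‖Matrix.toEuclideanCLM (𝕜 := ℂ) (n := Fin n) A‖ * ‖y‖) := by
          gcongr; exact ContinuousLinearMap.le_opNorm _ _
      _ = ‖Matrix.toEuclideanCLM (𝕜 := ℂ) (n := Fin n) A‖ := by rw [hy]; ring
  · exact ⟨x, hx, rfl⟩

-- bridge: inner in terms of dotProduct, for an arbitrary x viewed as a function
lemma inner_toEuclideanCLM (A : Mat n) (x : EuclideanSpace ℂ (Fin n)) :
    (inner ℂ x (Matrix.toEuclideanCLM (𝕜 := ℂ) (n := Fin n) A x) : ℂ)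
      = star (WithLp.equiv 2 _ x) ⬝ᵥ (A *ᵥ (WithLp.equiv 2 _ x)) := by
  rw [EuclideanSpace.inner_eq_star_dotProduct, dotProduct_comm]
  rfl

lemma exists_unimodular_shift (U : Mat n) :
    ∃ ζ : ℂ, (starRingEnd ℂ) ζ * ζ = 1 ∧ IsUnit (ζ • (1 : Mat n) + U) := by
  have hinj : Set.InjOn (fun t : ℝ => Complex.exp (t * Complex.I)) (Set.Ioo (0:ℝ) 1) := by
    intro a ha b hb hab
    simp only [Complex.exp_eq_exp_iff_exists_int] at hab
    obtain ⟨k, hk⟩ := hab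
    have : (a : ℂ) = (b : ℂ) + k * (2 * Real.pi) := by
      have h2 : ((a : ℂ) - b - k * (2 * Real.pi)) * Complex.I = 0 := by
        push_cast at hk ⊢; ring_nf; ring_nf at hk
        rw [hk]; ring
      have := mul_eq_zero.mp h2
      simp [Complex.I_ne_zero] at this
      linear_combination this
    have hreal : a = b + (k : ℝ) * (2 * Real.pi) := by
      exact_mod_cast this
    have hk0 : k = 0 := by
      by_contra hk0
      have h1 : (1 : ℝ) ≤ |(k : ℝ)| := by
        rw [← Int.cast_abs]; exact_mod_cast Int.one_le_abs (by simpa using hk0)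
      have hpi : (2:ℝ) ≤ 2 * Real.pi := by nlinarith [Real.pi_gt_three]
      have : |a - b| < 1 := by
        rw [abs_sub_lt_iff]; constructor <;> nlinarith [ha.1, ha.2, hb.1, hb.2]
      rw [hreal] at this
      simp only [add_sub_cancel_left] at this
      rw [abs_mul, abs_of_pos (by positivity : (0:ℝ) < 2 * Real.pi)] at this
      nlinarith
    simp [hk0] at hreal; exact hreal
  have hS : Set.Infinite ((fun t : ℝ => Complex.exp (t * Complex.I)) '' Set.Ioo (0:ℝ) 1) :=
    Set.Infinite.image hinj (Set.Ioo_infinite (by norm_num))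
  have hbad : Set.Finite (Neg.neg ⁻¹' (spectrum ℂ U)) :=
    Set.Finite.preimage (neg_injective.injOn) (U.finite_spectrum)
  obtain ⟨ζ, hζS, hζbad⟩ := (hS.diff hbad).nonempty
  obtain ⟨t, _, rfl⟩ := hζS
  refine ⟨Complex.exp (t * Complex.I), ?_, ?_⟩
  · rw [Complex.conj_mul']
    norm_cast
    rw [Complex.norm_exp_ofReal_mul_I]
    norm_num
  · have : IsUnit ((algebraMap ℂ (Mat n)) (-(Complex.exp (t * Complex.I))) - U) := by
      rw [← spectrum.notMem_iff]
      simpa using hζbad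
    rw [Algebra.algebraMap_eq_smul_one] at this
    have := this.neg
    simpa [neg_smul, neg_sub, sub_neg_eq_add, add_comm] using this

lemma unitary_eigenbasis (U : Mat n) (hU : U ∈ Matrix.unitaryGroup (Fin n) ℂ) :
    ∃ (f : OrthonormalBasis (Fin n) ℂ (EuclideanSpace ℂ (Fin n))) (c : Fin n → ℂ),
      (∀ j, (starRingEnd ℂ) (c j) * c j = 1) ∧ ∀ j, U *ᵥ ⇑(f j) = c j • ⇑(f j) := by
  obtain ⟨ζ, hζ1, hζU⟩ := exists_unimodular_shift U
  have hζ0 : ζ ≠ 0 := by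
    intro h; rw [h] at hζ1; simp at hζ1
  have hUU : Uᴴ * U = 1 := by
    rw [← Matrix.star_eq_conjTranspose]
    exact (Matrix.mem_unitaryGroup_iff').mp hU
  set Mp : Mat n := ζ • (1 : Mat n) + U with hMp
  set Mm : Mat n := ζ • (1 : Mat n) - U with hMm
  have hdet : IsUnit Mp.det := (Matrix.isUnit_iff_isUnit_det _).mp hζU
  have hdetH : IsUnit (Mpᴴ).det := by
    rw [Matrix.det_conjTranspose]
    rw [isUnit_iff_ne_zero] at hdet ⊢
    simpa using hdet
  have hskew : Mmᴴ * Mp = -(Mpᴴ * Mm) := by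
    have h1 : Mmᴴ = (starRingEnd ℂ) ζ • (1 : Mat n) - Uᴴ := by
      simp [hMm, conjTranspose_smul, Complex.star_def]
    have h2 : Mpᴴ = (starRingEnd ℂ) ζ • (1 : Mat n) + Uᴴ := by
      simp [hMp, conjTranspose_smul, Complex.star_def]
    rw [h1, h2, hMp, hMm]
    simp only [sub_mul, add_mul, mul_add, mul_sub, smul_mul_assoc, Matrix.mul_smul,
      one_mul, mul_one, smul_smul, hUU, hζ1]
    rw [one_smul]
    abel
  set K : Mat n := Mm * Mp⁻¹ with hK
  have hKskew : Kᴴ = -K := by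
    rw [hK, conjTranspose_mul, conjTranspose_nonsing_inv]
    have h1 : Mmᴴ = -(Mpᴴ * Mm) * Mp⁻¹ := by
      rw [← hskew, Matrix.mul_nonsing_inv_cancel_right _ _ hdet]
    rw [h1]
    rw [neg_mul, mul_neg, ← mul_assoc, ← mul_assoc, Matrix.nonsing_inv_mul _ hdetH, one_mul]
  have hH : (Complex.I • K).IsHermitian := by
    rw [Matrix.IsHermitian, conjTranspose_smul, hKskew]
    simp [smul_smul, Complex.conj_I]
  set f := hH.eigenvectorBasis with hf
  set θ := hH.eigenvalues with hθ
  have hHf : ∀ j, (Complex.I • K) *ᵥ ⇑(f j) = ((θ j : ℂ)) • ⇑(f j) := by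
    intro j
    have := hH.mulVec_eigenvectorBasis j
    rw [this]
    funext i
    simp [Complex.real_smul]
    rfl
  have hKf : ∀ j, K *ᵥ ⇑(f j) = (-(Complex.I * (θ j : ℂ))) • ⇑(f j) := by
    intro j
    have h2 := hHf j
    rw [smul_mulVec] at h2
    have := congrArg (fun v => (-Complex.I) • v) h2
    simp only [smul_smul] at this
    simpa [Complex.I_mul_I, neg_mul, neg_neg] using this
  refine ⟨f, fun j => ((1:ℂ) - Complex.I * (θ j : ℂ))⁻¹ * (ζ * ((1:ℂ) + Complex.I * (θ j : ℂ))), ?_, ?_⟩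
  · intro j
    have h1m : (1:ℂ) - Complex.I * (θ j : ℂ) ≠ 0 := by
      intro h; have := congrArg Complex.re h; simp at this
    have h1p : (1:ℂ) + Complex.I * (θ j : ℂ) ≠ 0 := by
      intro h; have := congrArg Complex.re h; simp at this
    have hconj : (starRingEnd ℂ) ((1:ℂ) - Complex.I * (θ j : ℂ)) = (1:ℂ) + Complex.I * (θ j : ℂ) := by
      simp [map_sub, _root_.map_mul, Complex.conj_I, Complex.conj_ofReal]
    have hconj' : (starRingEnd ℂ) ((1:ℂ) + Complex.I * (θ j : ℂ)) = (1:ℂ) - Complex.I * (θ j : ℂ) := by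
      simp [map_add, _root_.map_mul, Complex.conj_I, Complex.conj_ofReal]
      ring
    simp only [_root_.map_mul, map_inv₀, hconj, hconj']
    field_simp
    linear_combination hζ1
  · intro j
    have h1m : (1:ℂ) - Complex.I * (θ j : ℂ) ≠ 0 := by
      intro h; have := congrArg Complex.re h; simp at this
    set g : Fin n → ℂ := Mp⁻¹ *ᵥ ⇑(f j) with hg
    have hg1 : ζ • g + U *ᵥ g = ⇑(f j) := by
      have : Mp *ᵥ g = ⇑(f j) := by
        rw [hg, mulVec_mulVec, Matrix.mul_nonsing_inv _ hdet, one_mulVec]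
      rw [← this, hMp, add_mulVec, smul_mulVec, one_mulVec]
    have hg2 : ζ • g - U *ᵥ g = (-(Complex.I * (θ j : ℂ))) • ⇑(f j) := by
      have : Mm *ᵥ g = (-(Complex.I * (θ j : ℂ))) • ⇑(f j) := by
        rw [hg, mulVec_mulVec, ← hK]; exact hKf j
      rw [← this, hMm, sub_mulVec, smul_mulVec, one_mulVec]
    have hadd : (2 * ζ) • g = ((1:ℂ) - Complex.I * (θ j : ℂ)) • ⇑(f j) := by
      have := congrArg₂ (· + ·) hg1 hg2
      simp only [sub_smul, one_smul, neg_smul] at this ⊢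
      rw [two_mul, add_smul]
      calc ζ • g + ζ • g = (ζ • g + U *ᵥ g) + (ζ • g - U *ᵥ g) := by abel
        _ = _ := by rw [hg1, hg2]; rw [neg_smul]; abel
    have hsub : (2:ℂ) • (U *ᵥ g) = ((1:ℂ) + Complex.I * (θ j : ℂ)) • ⇑(f j) := by
      rw [two_smul, add_smul, one_smul]
      calc U *ᵥ g + U *ᵥ g = (ζ • g + U *ᵥ g) - (ζ • g - U *ᵥ g) := by abel
        _ = _ := by rw [hg1, hg2]; rw [neg_smul]; abel
    -- U *ᵥ ((2ζ) • g) two ways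
    have key : ((1:ℂ) - Complex.I * (θ j : ℂ)) • (U *ᵥ ⇑(f j)) = (ζ * ((1:ℂ) + Complex.I * (θ j : ℂ))) • ⇑(f j) := by
      have e1 : U *ᵥ ((2 * ζ) • g) = (2 * ζ) • (U *ᵥ g) := by rw [mulVec_smul]
      rw [hadd] at e1
      rw [mulVec_smul] at e1
      -- e1 : (1 - Iθ) • (U *ᵥ f j) = (2ζ) • (U *ᵥ g)
      rw [e1, mul_comm 2 ζ, mul_smul, hsub, smul_smul]
    have := congrArg (fun v => ((1:ℂ) - Complex.I * (θ j : ℂ))⁻¹ • v) key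
    simp only [smul_smul, inv_mul_cancel₀ h1m, one_smul] at this
    rw [this]

lemma polar_decomp (A : Mat n) :
    ∃ U : Mat n, U ∈ Matrix.unitaryGroup (Fin n) ℂ ∧
      A = U * (Matrix.posSemidef_conjTranspose_mul_self A).sqrt := by
  classical
  set h1 := Matrix.posSemidef_conjTranspose_mul_self A with hh1
  set hH := h1.1 with hhH
  set w := hH.eigenvectorBasis with hw
  set μ := hH.eigenvalues with hμ
  have hμ0 : ∀ j, 0 ≤ μ j := fun j => h1.eigenvalues_nonneg j
  set σ : Fin n → ℝ := fun j => Real.sqrt (μ j) with hσ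
  set W : Mat n := (hH.eigenvectorUnitary : Mat n) with hW
  have hWW : W * Wᴴ = 1 := by
    have := (Matrix.mem_unitaryGroup_iff).mp hH.eigenvectorUnitary.2
    rwa [Matrix.star_eq_conjTranspose] at this
  have hPdef : h1.sqrt = W * diagonal ((↑) ∘ Real.sqrt ∘ μ) * Wᴴ := rfl
  have hPw : ∀ j, h1.sqrt *ᵥ ⇑(w j) = (σ j : ℂ) • ⇑(w j) := by
    intro j
    rw [hPdef, ← Matrix.mulVec_mulVec, ← Matrix.mulVec_mulVec,
      show (Wᴴ : Mat n) = star W from rfl, hH.star_eigenvectorUnitary_mulVec j,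
      Matrix.diagonal_mulVec_single]
    have hsingle : (Pi.single j (((Complex.ofReal ∘ Real.sqrt ∘ μ) j) * 1) : Fin n → ℂ)
        = (σ j : ℂ) • (Pi.single j 1 : Fin n → ℂ) := by
      funext i
      simp [Pi.single_apply, mul_ite]
      rfl
    rw [hsingle, Matrix.mulVec_smul, hH.eigenvectorUnitary_mulVec]
  have hAA : ∀ j, (Aᴴ * A) *ᵥ ⇑(w j) = (μ j : ℂ) • ⇑(w j) := by
    intro j
    rw [hH.mulVec_eigenvectorBasis j]
    funext i
    simp [Complex.real_smul]
    rfl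
  have hdot : ∀ i j, star (A *ᵥ ⇑(w i)) ⬝ᵥ (A *ᵥ ⇑(w j))
      = (μ j : ℂ) * (if i = j then 1 else 0) := by
    intro i j
    rw [Matrix.star_mulVec, ← Matrix.dotProduct_mulVec, Matrix.mulVec_mulVec, hAA j,
      dotProduct_smul]
    have hij : star ⇑(w i) ⬝ᵥ ⇑(w j) = (if i = j then 1 else 0 : ℂ) := by
      have := orthonormal_iff_ite.mp w.orthonormal i j
      rw [← this]
      exact dotProduct_comm _ _
    rw [hij, smul_eq_mul]
  set u : Fin n → EuclideanSpace ℂ (Fin n) := fun j =>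
    if σ j = 0 then w j else ((σ j : ℂ))⁻¹ • (WithLp.equiv 2 _).symm (A *ᵥ ⇑(w j)) with hu
  have horth : Orthonormal ℂ (Set.restrict {j | σ j ≠ 0} u) := by
    rw [orthonormal_iff_ite]
    rintro ⟨i, hi⟩ ⟨j, hj⟩
    show inner ℂ (u i) (u j) = _
    simp only [hu, if_neg (show ¬ σ i = 0 from hi), if_neg (show ¬ σ j = 0 from hj)]
    rw [inner_smul_left, inner_smul_right, WithLp.equiv_symm_apply, EuclideanSpace.inner_toLp_toLp,
      dotProduct_comm, hdot i j]
    rw [map_inv₀, Complex.conj_ofReal]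
    by_cases hij : i = j
    · subst hij
      rw [if_pos rfl, if_pos rfl]
      have hσμ : (σ i : ℝ) * σ i = μ i := Real.mul_self_sqrt (hμ0 i)
      have hσi : (σ i : ℂ) ≠ 0 := by exact_mod_cast hi
      field_simp
      exact_mod_cast (sq (σ i)).trans hσμ |>.symm
    · rw [if_neg hij, if_neg (by simpa [Subtype.ext_iff] using hij)]
      simp
  obtain ⟨b, hb⟩ := horth.exists_orthonormalBasis_extension_of_card_eq (by simp)
  have hAw : ∀ j, A *ᵥ ⇑(w j) = (σ j : ℂ) • ⇑(b j) := by
    intro j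
    by_cases hj : σ j = 0
    · have hμj : μ j = 0 := by
        have := Real.sqrt_eq_zero (hμ0 j) |>.mp hj
        exact this
      have h0 : star (A *ᵥ ⇑(w j)) ⬝ᵥ (A *ᵥ ⇑(w j)) = 0 := by
        rw [hdot j j, if_pos rfl, hμj]; simp
      have hv0 : (A *ᵥ ⇑(w j)) = 0 := dotProduct_star_self_eq_zero.mp h0
      rw [hv0, hj]
      simp
    · have hbj : b j = u j := hb j hj
      rw [hbj, hu]
      simp only [if_neg hj]
      have hσj : (σ j : ℂ) ≠ 0 := by exact_mod_cast hj
      simp [WithLp.equiv_symm_apply, WithLp.ofLp_smul, Equiv.apply_symm_apply, smul_smul, mul_inv_cancel₀ hσj]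
  set Bm : Mat n := (EuclideanSpace.basisFun (Fin n) ℂ).toBasis.toMatrix ⇑b.toBasis with hBm
  have hBmem : Bm ∈ Matrix.unitaryGroup (Fin n) ℂ :=
    (EuclideanSpace.basisFun (Fin n) ℂ).toMatrix_orthonormalBasis_mem_unitary b
  have hBapply : ∀ i j, Bm i j = b j i := fun i j => rfl
  set U : Mat n := Bm * Wᴴ with hUdef
  have hUmem : U ∈ Matrix.unitaryGroup (Fin n) ℂ := by
    apply mul_mem hBmem
    rw [Matrix.mem_unitaryGroup_iff, show (Wᴴ : Mat n) = star W from rfl, star_star]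
    exact (Matrix.mem_unitaryGroup_iff').mp hH.eigenvectorUnitary.2
  have hUw : ∀ j, U *ᵥ ⇑(w j) = ⇑(b j) := by
    intro j
    rw [hUdef, ← Matrix.mulVec_mulVec, show (Wᴴ : Mat n) = star W from rfl,
      hH.star_eigenvectorUnitary_mulVec j]
    funext i
    simp [Matrix.mulVec_single, hBapply]
  have hUP : ∀ j, (U * h1.sqrt) *ᵥ ⇑(w j) = A *ᵥ ⇑(w j) := by
    intro j
    rw [← Matrix.mulVec_mulVec, hPw j, Matrix.mulVec_smul, hUw j, hAw j]
  refine ⟨U, hUmem, ?_⟩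
  have hAW : A * W = (U * h1.sqrt) * W := by
    ext i j
    have := congrFun (hUP j) i
    simp only [Matrix.mulVec, dotProduct] at this
    simp only [Matrix.mul_apply]
    exact this.symm
  calc A = A * (W * Wᴴ) := by rw [hWW, mul_one]
    _ = (A * W) * Wᴴ := by rw [mul_assoc]
    _ = (U * h1.sqrt) * W * Wᴴ := by rw [hAW]
    _ = (U * h1.sqrt) * (W * Wᴴ) := by rw [mul_assoc]
    _ = U * h1.sqrt := by rw [hWW, mul_one]

end TNauxPf

theorem traceNorm_min_LNorm_above_numRadius {n : ℕ} (N : Mat n → ℝ)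
    (hN : IsMatrixNorm N) (hL : IsLNorm N)
    (hω : ∀ A : Mat n, numRadius A ≤ N A) :
    ∀ A : Mat n, traceNorm A ≤ N A := by
  intro A
  obtain ⟨U, hUmem, hUP⟩ := TNauxPf.polar_decomp A
  obtain ⟨f, c, hc, hUf⟩ := TNauxPf.unitary_eigenbasis U hUmem
  set P : Mat n := (Matrix.posSemidef_conjTranspose_mul_self A).sqrt with hP
  have hPsd : P.PosSemidef := by
    rw [hP, Matrix.PosSemidef.sqrt]
    exact (Matrix.posSemidef_diagonal_iff.mpr fun i => by simp [Real.sqrt_nonneg]).mul_mul_conjTranspose_same _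
  set F : Mat n := (EuclideanSpace.basisFun (Fin n) ℂ).toBasis.toMatrix ⇑f.toBasis with hF
  have hFmem : F ∈ Matrix.unitaryGroup (Fin n) ℂ :=
    (EuclideanSpace.basisFun (Fin n) ℂ).toMatrix_orthonormalBasis_mem_unitary f
  have hFapply : ∀ i j, F i j = f j i := fun i j => rfl
  have hFF : F * Fᴴ = 1 := by
    have := (Matrix.mem_unitaryGroup_iff).mp hFmem
    rwa [Matrix.star_eq_conjTranspose] at this
  set v : Fin n → Fin n → ℂ := fun j => ⇑(f j) with hv
  have hvunit : ∀ j, star (v j) ⬝ᵥ (v j) = 1 := by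
    intro j
    have h1 : (inner ℂ (f j) (f j) : ℂ) = 1 := by
      rw [inner_self_eq_norm_sq_to_K, f.orthonormal.1 j]
      norm_num
    exact (dotProduct_comm _ _).trans h1
  set C : Fin n → Mat n := fun j => vecMulVec (v j) (star (v j)) with hC
  have hCH : ∀ j, (C j)ᴴ = C j := fun j => TNauxPf.vmv_conjT (v j)
  have hCC : ∀ j, (C j)ᴴ * C j = C j := by
    intro j
    rw [hCH j]
    have h2 := TNauxPf.vmv_mul_mul (v j) (1 : Mat n)
    rw [mul_one, Matrix.one_mulVec, hvunit j, one_smul] at h2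
    exact h2
  have hCsum : ∑ j, (C j)ᴴ * (C j) = 1 := by
    simp only [hCC]
    ext i k
    rw [← hFF]
    simp only [Matrix.sum_apply, hC, vecMulVec_apply, Matrix.mul_apply, conjTranspose_apply,
      Pi.star_apply, hFapply]
    rfl
  set s : Fin n → ℂ := fun j => star (v j) ⬝ᵥ (A *ᵥ v j) with hs
  set t : Fin n → ℂ := fun j => star (v j) ⬝ᵥ (P *ᵥ v j) with ht
  -- upper bound : ∑ |s j| ≤ N A
  have hCAC : ∀ j, C j * A * (C j)ᴴ = s j • C j := by
    intro j
    rw [hCH j]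
    exact TNauxPf.vmv_mul_mul (v j) A
  have hNC : ∀ j, 1 ≤ N (C j) := by
    intro j
    refine le_trans ?_ (le_trans (TNauxPf.le_numRadius (C j) (f j) (f.orthonormal.1 j)) (hω (C j)))
    rw [TNauxPf.inner_toEuclideanCLM]
    have h3 : (C j) *ᵥ (v j) = v j := by
      rw [hC, TNauxPf.vmv_mulVec, hvunit j, one_smul]
    show (1:ℝ) ≤ ‖star (v j) ⬝ᵥ (C j *ᵥ v j)‖
    rw [h3, hvunit j]
    norm_num
  have hupper : ∑ j, ‖s j‖ ≤ N A := by
    calc ∑ j, ‖s j‖ ≤ ∑ j, ‖s j‖ * N (C j) := by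
          apply Finset.sum_le_sum
          intro j _
          nth_rewrite 1 [← mul_one (‖s j‖)]
          exact mul_le_mul_of_nonneg_left (hNC j) (norm_nonneg _)
      _ = ∑ j, N (C j * A * (C j)ᴴ) := by
          apply Finset.sum_congr rfl
          intro j _
          rw [hCAC j, hN.2.1]
      _ ≤ N A := hL n C A hCsum
  -- lower bound : traceNorm A = ∑ |s j|
  have hcstar : ∀ j, star (c j) • (v j) = Uᴴ *ᵥ (v j) := by
    intro j
    have hUU : Uᴴ * U = 1 := by
      have := (Matrix.mem_unitaryGroup_iff').mp hUmem
      rwa [Matrix.star_eq_conjTranspose] at this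
    have h1 : Uᴴ *ᵥ (U *ᵥ v j) = v j := by
      rw [Matrix.mulVec_mulVec, hUU, Matrix.one_mulVec]
    rw [hUf j, Matrix.mulVec_smul] at h1
    have h2 := congrArg (fun y => star (c j) • y) h1
    simp only [smul_smul, Complex.star_def, hc j, one_smul] at h2
    exact h2.symm
  have hst : ∀ j, s j = c j * t j := by
    intro j
    rw [hs]
    simp only
    rw [hUP, ← Matrix.mulVec_mulVec, Matrix.dotProduct_mulVec]
    have h4 : star (v j) ᵥ* U = c j • star (v j) := by
      have h5 : star (Uᴴ *ᵥ v j) = star (v j) ᵥ* U := by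
        rw [Matrix.star_mulVec, conjTranspose_conjTranspose]
      rw [← h5, ← hcstar j, star_smul, star_star]
    rw [h4, smul_dotProduct, smul_eq_mul]
  have htre : ∀ j, ‖s j‖ = (t j).re := by
    intro j
    have hpos : (0:ℂ) ≤ t j := hPsd.dotProduct_mulVec_nonneg (v j)
    have h00 := Complex.le_def.mp hpos
    have habs_c : ‖c j‖ = 1 := by
      have h6 : ‖c j‖ * ‖c j‖ = 1 := by
        have h7 := congrArg norm (hc j)
        simpa [norm_mul, Complex.norm_conj] using h7
      nlinarith [norm_nonneg (c j)]
    have h7 : t j = ((t j).re : ℂ) := Complex.ext rfl (by simpa using h00.2.symm)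
    calc ‖s j‖ = ‖t j‖ := by
          rw [hst j, norm_mul, habs_c, one_mul]
      _ = |(t j).re| := by nth_rewrite 1 [h7]; rw [Complex.norm_real, Real.norm_eq_abs]
      _ = (t j).re := abs_of_nonneg (by simpa using h00.1)
  have hdiag : ∀ j, (Fᴴ * P * F) j j = t j := by
    intro j
    rw [Matrix.mul_apply]
    simp only [Matrix.mul_apply, conjTranspose_apply, hFapply, ht, dotProduct, Matrix.mulVec,
      Pi.star_apply, hv, Finset.sum_mul, Finset.mul_sum]
    rw [Finset.sum_comm]
    apply Finset.sum_congr rfl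
    intro p _
    apply Finset.sum_congr rfl
    intro q _
    ring
  have htrace : traceNorm A = ∑ j, (t j).re := by
    have h8 : P.trace = Matrix.trace (Fᴴ * P * F) := by
      rw [Matrix.trace_mul_cycle, hFF, Matrix.one_mul]
    rw [traceNorm, ← hP, h8, Matrix.trace]
    rw [Complex.re_sum]
    apply Finset.sum_congr rfl
    intro j _
    rw [Matrix.diag_apply, hdiag j]
  rw [htrace]
  calc ∑ j, (t j).re = ∑ j, ‖s j‖ := by
        apply Finset.sum_congr rfl
        intro j _
        rw [htre j]
    _ ≤ N A := hupper
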